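/- Let f : ℝ → ℝ be differentiable with −λ ≤ f′(s) ≤ λ for all s ∈ ℝ (subcharacteristic condition), and let Δx, Δt > 0 satisfy λ·Δt ≤ Δx. Then the update map H(a, b, c) = b − (Δt/(2Δx))·(f(c) − f(a)) + (λΔt/(2Δx))·(c − 2b + a) is monotone: H is nondecreasing in each of its three arguments a, b, c. -/

import Mathlib

/-- under the subcharacteristic condition −λ ≤ f′ ≤ λ and the CFL
condition λΔt ≤ Δx, the update map of the first-order relaxed scheme is monotone
(nondecreasing) in each of its three arguments. -/
theorem relaxed_scheme_monotone
    (f : ℝ → ℝ) (hf : Differentiable ℝ f)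
    (lam dx dt : ℝ) (hlam : 0 < lam) (hdx : 0 < dx) (hdt : 0 < dt)
    (hsub : ∀ s : ℝ, -lam ≤ deriv f s ∧ deriv f s ≤ lam)
    (hcfl : lam * dt ≤ dx) :
    (∀ b c : ℝ, Monotone (fun a : ℝ =>
      b - (dt / (2 * dx)) * (f c - f a) + (lam * dt / (2 * dx)) * (c - 2 * b + a))) ∧
    (∀ a c : ℝ, Monotone (fun b : ℝ =>
      b - (dt / (2 * dx)) * (f c - f a) + (lam * dt / (2 * dx)) * (c - 2 * b + a))) ∧
    (∀ a b : ℝ, Monotone (fun c : ℝ =>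
      b - (dt / (2 * dx)) * (f c - f a) + (lam * dt / (2 * dx)) * (c - 2 * b + a))) := by
  have hk : (0:ℝ) < dt / (2 * dx) := by positivity
  have hm : lam * dt / (2 * dx) = lam * (dt / (2 * dx)) := by ring
  refine ⟨?_, ?_, ?_⟩
  · intro b c
    have hD : ∀ a : ℝ, HasDerivAt (fun a : ℝ =>
        b - (dt / (2 * dx)) * (f c - f a) + (lam * dt / (2 * dx)) * (c - 2 * b + a))
        (dt / (2 * dx) * deriv f a + lam * dt / (2 * dx)) a := by
      intro a
      have h := (hf a).hasDerivAt
      have h1 : HasDerivAt (fun a : ℝ => b - (dt / (2 * dx)) * (f c - f a))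
          (dt / (2 * dx) * deriv f a) a := by
        have := ((hasDerivAt_const a (f c)).sub h).const_mul (dt / (2 * dx))
        have h2 := (hasDerivAt_const a b).sub this
        exact h2.congr_deriv (by ring)
      have h3 : HasDerivAt (fun a : ℝ => (lam * dt / (2 * dx)) * (c - 2 * b + a))
          (lam * dt / (2 * dx)) a := by
        have := ((hasDerivAt_id a).const_add (c - 2 * b)).const_mul (lam * dt / (2 * dx))
        exact this.congr_deriv (by ring)
      exact h1.add h3
    apply monotone_of_deriv_nonneg (fun a => (hD a).differentiableAt)
    intro a
    rw [(hD a).deriv]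
    have h4 := (hsub a).1
    have h5 : 0 ≤ dt / (2 * dx) * (deriv f a + lam) :=
      mul_nonneg hk.le (by linarith)
    rw [hm]; nlinarith
  · intro a c
    intro x y hxy
    simp only
    have h2 : lam * dt / (2 * dx) ≤ 1 / 2 := by
      rw [div_le_div_iff₀ (by positivity) (by norm_num)]
      nlinarith
    nlinarith [mul_nonneg (sub_nonneg.2 hxy) (by linarith : (0:ℝ) ≤ 1 - 2 * (lam * dt / (2 * dx)))]
  · intro a b
    have hD : ∀ c : ℝ, HasDerivAt (fun c : ℝ =>
        b - (dt / (2 * dx)) * (f c - f a) + (lam * dt / (2 * dx)) * (c - 2 * b + a))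
        (-(dt / (2 * dx)) * deriv f c + lam * dt / (2 * dx)) c := by
      intro c
      have h := (hf c).hasDerivAt
      have h1 : HasDerivAt (fun c : ℝ => b - (dt / (2 * dx)) * (f c - f a))
          (-(dt / (2 * dx)) * deriv f c) c := by
        have := (h.sub_const (f a)).const_mul (dt / (2 * dx))
        have h2 := (hasDerivAt_const c b).sub this
        exact h2.congr_deriv (by ring)
      have h3 : HasDerivAt (fun c : ℝ => (lam * dt / (2 * dx)) * (c - 2 * b + a))
          (lam * dt / (2 * dx)) c := by
        have : HasDerivAt (fun c : ℝ => c - 2 * b + a) 1 c := by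
          have := ((hasDerivAt_id c).sub_const (2 * b)).add_const a
          convert this using 1 <;> rfl
        have := this.const_mul (lam * dt / (2 * dx))
        exact this.congr_deriv (by ring)
      exact h1.add h3
    apply monotone_of_deriv_nonneg (fun c => (hD c).differentiableAt)
    intro c
    rw [(hD c).deriv]
    have h4 := (hsub c).2
    have h5 : 0 ≤ dt / (2 * dx) * (lam - deriv f c) :=
      mul_nonneg hk.le (by linarith)
    rw [hm]; nlinarith
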